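/- For every integer N ≥ 1 and every n with 0 ≤ n ≤ N, one has φ(n,N+1) - φ(n,N) = (3/(2N+3)) * (1/(N+1-n) - 1/(n+N+2)) * Σ_{n₁=n+1}^{N} 1/(2n₁+1) + (3/((2N+3)(2n+1))) * (1/(N+1-n) - 2/(2N+3)), and this quantity is strictly positive; in particular φ(n,N) is strictly increasing in N for fixed n. -/

import Mathlib

/-- φ(n,N): the sum over triples (n₁,n₂,n₃) ∈ [-(N+1),N]³ with n₁+n₂+n₃ = n-1
of ∏ᵢ 1/(2nᵢ+1). -/
noncomputable def phi (n N : ℕ) : ℚ :=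
  ∑ p ∈ ((Finset.Icc (-(N : ℤ) - 1) (N : ℤ)) ×ˢ (Finset.Icc (-(N : ℤ) - 1) (N : ℤ)) ×ˢ
      (Finset.Icc (-(N : ℤ) - 1) (N : ℤ))).filter
      (fun p => p.1 + p.2.1 + p.2.2 = (n : ℤ) - 1),
    (1 / (2 * (p.1 : ℚ) + 1)) * (1 / (2 * (p.2.1 : ℚ) + 1)) * (1 / (2 * (p.2.2 : ℚ) + 1))

namespace PhiAux

noncomputable def w (m : ℤ) : ℚ := 1 / (2 * (m : ℚ) + 1)

noncomputable def J (N : ℕ) : Finset ℤ := Finset.Icc (-(N : ℤ) - 1) (N : ℤ)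

noncomputable def wI (N : ℕ) (m : ℤ) : ℚ := if m ∈ J N then w m else 0

noncomputable def g (N : ℕ) (s : ℤ) : ℚ := ∑ b ∈ J N, w b * wI N (s - b)

lemma den_ne (m : ℤ) : (2 * (m : ℚ) + 1) ≠ 0 := by
  have h : ((2 * m + 1 : ℤ) : ℚ) ≠ 0 := by
    exact_mod_cast (by omega : (2 * m + 1 : ℤ) ≠ 0)
  push_cast at h
  intro hc; apply h; linarith

lemma w_reflect (m : ℤ) : w (-1 - m) = - w m := by
  unfold w
  have h1 := den_ne m
  have h2 := den_ne (-1 - m)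
  push_cast at h2 ⊢
  field_simp
  ring

lemma mem_J {N : ℕ} {m : ℤ} : m ∈ J N ↔ -(N : ℤ) - 1 ≤ m ∧ m ≤ N := by
  simp [J, Finset.mem_Icc]

lemma sum_reflect (l h s : ℤ) (f : ℤ → ℚ) :
    ∑ b ∈ Finset.Icc l h, f (s - b) = ∑ b ∈ Finset.Icc (s - h) (s - l), f b := by
  apply Finset.sum_bij' (fun b _ => s - b) (fun b _ => s - b)
  · intro a ha; simp only [Finset.mem_Icc] at *; omega
  · intro a ha; simp only [Finset.mem_Icc] at *; omega
  · intro a _; omega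
  · intro a _; omega
  · intro a _; rfl

lemma sum_J_zero (N : ℕ) : ∑ b ∈ J N, w b = 0 := by
  have h := sum_reflect (-(N : ℤ) - 1) (N : ℤ) (-1) w
  have h2 : ((-1 : ℤ) - (N : ℤ)) = -(N : ℤ) - 1 := by ring
  have h3 : ((-1 : ℤ) - (-(N : ℤ) - 1)) = (N : ℤ) := by ring
  rw [h2, h3] at h
  have h4 : ∑ b ∈ Finset.Icc (-(N : ℤ) - 1) (N : ℤ), w (-1 - b)
      = ∑ b ∈ Finset.Icc (-(N : ℤ) - 1) (N : ℤ), (- w b) :=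
    Finset.sum_congr rfl (fun b _ => w_reflect b)
  rw [h4, Finset.sum_neg_distrib] at h
  unfold J
  linarith

lemma sum_split (N n : ℕ) (hn : n ≤ N) :
    ∑ b ∈ Finset.Icc (-(N : ℤ) - 1) ((n : ℤ) - 1), w b
      = - ∑ b ∈ Finset.Icc (n : ℤ) (N : ℤ), w b := by
  have hu : Finset.Icc (-(N : ℤ) - 1) ((n : ℤ) - 1) ∪ Finset.Icc (n : ℤ) (N : ℤ)
      = Finset.Icc (-(N : ℤ) - 1) (N : ℤ) := by
    ext x
    simp only [Finset.mem_union, Finset.mem_Icc]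
    omega
  have hd : Disjoint (Finset.Icc (-(N : ℤ) - 1) ((n : ℤ) - 1)) (Finset.Icc (n : ℤ) (N : ℤ)) := by
    simp only [Finset.disjoint_left, Finset.mem_Icc]
    intro a h1 h2; omega
  have hsu := Finset.sum_union (f := w) hd
  rw [hu] at hsu
  have h0 := sum_J_zero N
  unfold J at h0
  linarith

lemma partial_frac (s b : ℤ) (hs : s ≠ -1) :
    w b * w (s - b) = 1 / (2 * (s : ℚ) + 2) * (w b + w (s - b)) := by
  unfold w
  have h1 := den_ne b
  have h2 := den_ne (s - b)
  push_cast at h2 ⊢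
  have h3 : (2 * (s : ℚ) + 2) ≠ 0 := by
    have h4 : ((s + 1 : ℤ) : ℚ) ≠ 0 := by exact_mod_cast (by omega : (s + 1 : ℤ) ≠ 0)
    push_cast at h4
    intro hc; apply h4; linarith
  have h5 : ((s : ℚ) + 1) ≠ 0 := by intro hc; apply h3; linarith
  field_simp
  ring

/-- restrict g to the interval where the indicator is nonzero -/
lemma g_eq_sum (N : ℕ) (s l h : ℤ) (hl : -(N : ℤ) - 1 ≤ l) (hh : h ≤ N)
    (hset : ∀ b : ℤ, -(N : ℤ) - 1 ≤ b → b ≤ N → ((s - b ∈ J N) ↔ (l ≤ b ∧ b ≤ h))) :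
    g N s = ∑ b ∈ Finset.Icc l h, w b * w (s - b) := by
  unfold g
  rw [← Finset.sum_subset (s₁ := Finset.Icc l h) (s₂ := J N)]
  · apply Finset.sum_congr rfl
    intro b hb
    simp only [Finset.mem_Icc] at hb
    have hm : s - b ∈ J N := by
      rw [hset b (by omega) (by omega)]; exact hb
    unfold wI; rw [if_pos hm]
  · intro b hb; simp only [Finset.mem_Icc] at hb; rw [mem_J]; omega
  · intro b hb hb2
    rw [mem_J] at hb
    simp only [Finset.mem_Icc] at hb2
    push_neg at hb2
    have hm : ¬ (s - b ∈ J N) := by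
      rw [hset b hb.1 hb.2]
      omega
    unfold wI; rw [if_neg hm, mul_zero]

lemma sum_icc_split (N n : ℕ) (_hn : n ≤ N) :
    ∑ b ∈ Finset.Icc (n : ℤ) (N : ℤ), w b
      = w n + ∑ b ∈ Finset.Icc ((n : ℤ) + 1) (N : ℤ), w b := by
  rw [show Finset.Icc (n : ℤ) (N : ℤ) = insert (n : ℤ) (Finset.Icc ((n : ℤ) + 1) (N : ℤ)) from by
    ext x; simp only [Finset.mem_Icc, Finset.mem_insert]; omega]
  rw [Finset.sum_insert (by simp only [Finset.mem_Icc]; omega)]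

lemma g_bot (N n : ℕ) (hn : n ≤ N) :
    g N ((n : ℤ) - 2 - N) = 1 / ((N : ℚ) + 1 - n) *
      (w n + ∑ b ∈ Finset.Icc ((n : ℤ) + 1) (N : ℤ), w b) := by
  have hs : ((n : ℤ) - 2 - N) ≠ -1 := by omega
  rw [g_eq_sum N ((n : ℤ) - 2 - N) (-(N : ℤ) - 1) ((n : ℤ) - 1) (le_refl _) (by omega)
    (by intro b h1 h2; rw [mem_J]; omega)]
  rw [Finset.sum_congr rfl (fun b _ => partial_frac ((n : ℤ) - 2 - N) b hs)]
  rw [← Finset.mul_sum, Finset.sum_add_distrib]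
  rw [sum_reflect (-(N : ℤ) - 1) ((n : ℤ) - 1) ((n : ℤ) - 2 - N) w]
  rw [show ((n : ℤ) - 2 - N - ((n : ℤ) - 1)) = -(N : ℤ) - 1 by ring,
      show ((n : ℤ) - 2 - N - (-(N : ℤ) - 1)) = (n : ℤ) - 1 by ring]
  rw [sum_split N n hn, sum_icc_split N n hn]
  have hc : (n : ℚ) ≤ N := by exact_mod_cast hn
  have hA : ((N : ℚ) + 1 - n) ≠ 0 := by intro hc2; linarith
  have hD : (2 * ((n : ℚ) - 2 - (N : ℚ)) + 2) ≠ 0 := by intro hc2; apply hA; linarith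
  have hE : ((n : ℚ) - 2 - N + 1) ≠ 0 := by intro hc2; apply hA; linarith
  push_cast
  field_simp
  ring

lemma g_top (N n : ℕ) (hn : n ≤ N) :
    g N ((n : ℤ) + 1 + N) = 1 / ((n : ℚ) + N + 2) *
      (∑ b ∈ Finset.Icc ((n : ℤ) + 1) (N : ℤ), w b) := by
  have hs : ((n : ℤ) + 1 + N) ≠ -1 := by omega
  rw [g_eq_sum N ((n : ℤ) + 1 + N) ((n : ℤ) + 1) (N : ℤ) (by omega) (le_refl _)
    (by intro b h1 h2; rw [mem_J]; omega)]
  rw [Finset.sum_congr rfl (fun b _ => partial_frac ((n : ℤ) + 1 + N) b hs)]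
  rw [← Finset.mul_sum, Finset.sum_add_distrib]
  rw [sum_reflect ((n : ℤ) + 1) (N : ℤ) ((n : ℤ) + 1 + N) w]
  rw [show ((n : ℤ) + 1 + N - (N : ℤ)) = (n : ℤ) + 1 by ring,
      show ((n : ℤ) + 1 + N - ((n : ℤ) + 1)) = (N : ℤ) by ring]
  have h1 : (0 : ℚ) ≤ (n : ℚ) := Nat.cast_nonneg n
  have h2 : (0 : ℚ) ≤ (N : ℚ) := Nat.cast_nonneg N
  have hB : ((n : ℚ) + N + 2) ≠ 0 := by intro hc; linarith
  have hD : (2 * ((n : ℚ) + 1 + (N : ℚ)) + 2) ≠ 0 := by intro hc; apply hB; linarith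
  push_cast
  field_simp
  ring

lemma phi_eq (n N : ℕ) : phi n N = ∑ a ∈ J N, w a * g N ((n : ℤ) - 1 - a) := by
  have h0 : phi n N = ∑ p ∈ ((Finset.Icc (-(N : ℤ) - 1) (N : ℤ)) ×ˢ
      (Finset.Icc (-(N : ℤ) - 1) (N : ℤ)) ×ˢ (Finset.Icc (-(N : ℤ) - 1) (N : ℤ))).filter
      (fun p => p.1 + p.2.1 + p.2.2 = (n : ℤ) - 1),
      w p.1 * w p.2.1 * w p.2.2 := rfl
  rw [h0, Finset.sum_filter]
  simp only [Finset.sum_product]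
  unfold J g wI J
  apply Finset.sum_congr rfl
  intro a _
  rw [Finset.mul_sum]
  apply Finset.sum_congr rfl
  intro b _
  have hstep : ∀ c ∈ Finset.Icc (-(N : ℤ) - 1) (N : ℤ),
      (if a + b + c = (n : ℤ) - 1 then w a * w b * w c else 0)
        = (if c = (n : ℤ) - 1 - a - b then w a * w b * w c else 0) := by
    intro c _
    split_ifs with h1 h2 h2 <;> first | rfl | (exfalso; omega)
  rw [Finset.sum_congr rfl hstep,
    Finset.sum_ite_eq' (Finset.Icc (-(N : ℤ) - 1) (N : ℤ)) ((n : ℤ) - 1 - a - b)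
      (fun c => w a * w b * w c)]
  split_ifs with h <;> ring

lemma J_succ (N : ℕ) : J (N + 1) = insert (-(N : ℤ) - 2) (insert ((N : ℤ) + 1) (J N)) := by
  ext x
  simp only [J, Finset.mem_Icc, Finset.mem_insert]
  push_cast
  omega

lemma wI_succ (N : ℕ) (c : ℤ) :
    wI (N + 1) c = wI N c + (if c = (N : ℤ) + 1 then w ((N : ℤ) + 1) else 0)
      + (if c = -(N : ℤ) - 2 then w (-(N : ℤ) - 2) else 0) := by
  have hm : (c ∈ J (N + 1)) ↔ (c ∈ J N ∨ c = (N : ℤ) + 1 ∨ c = -(N : ℤ) - 2) := by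
    simp only [mem_J]; push_cast; omega
  unfold wI
  by_cases h1 : c ∈ J N
  · have hne1 : c ≠ (N : ℤ) + 1 := by rw [mem_J] at h1; omega
    have hne2 : c ≠ -(N : ℤ) - 2 := by rw [mem_J] at h1; omega
    rw [if_pos (hm.mpr (Or.inl h1)), if_pos h1, if_neg hne1, if_neg hne2]
    ring
  · by_cases h2 : c = (N : ℤ) + 1
    · rw [if_pos (hm.mpr (Or.inr (Or.inl h2))), if_neg h1, if_pos h2, if_neg (by omega), h2]
      ring
    · by_cases h3 : c = -(N : ℤ) - 2
      · rw [if_pos (hm.mpr (Or.inr (Or.inr h3))), if_neg h1, if_neg h2, if_pos h3, h3]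
        ring
      · rw [if_neg (fun hc => by rcases hm.mp hc with h | h | h <;> [exact h1 h; exact h2 h; exact h3 h]),
          if_neg h1, if_neg h2, if_neg h3]
        ring

lemma sum_pick (N : ℕ) (s t : ℤ) (X : ℚ) :
    ∑ b ∈ J N, w b * (if s - b = t then X else 0) = wI N (s - t) * X := by
  have hstep : ∀ b ∈ J N, w b * (if s - b = t then X else 0)
      = (if b = s - t then w b * X else 0) := by
    intro b _
    split_ifs with h1 h2 h2 <;> first | ring1 | (exfalso; omega)
  rw [Finset.sum_congr rfl hstep, Finset.sum_ite_eq' (J N) (s - t) (fun b => w b * X)]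
  unfold wI
  split_ifs <;> simp

lemma g_succ (N : ℕ) (s : ℤ) :
    g (N + 1) s = g N s
      + w ((N : ℤ) + 1) * (2 * wI N (s - ((N : ℤ) + 1)))
      + w (-(N : ℤ) - 2) * (2 * wI N (s - (-(N : ℤ) - 2)))
      + (if s = 2 * (N : ℤ) + 2 then w ((N : ℤ) + 1) * w ((N : ℤ) + 1) else 0)
      + (if s = -1 then 2 * (w ((N : ℤ) + 1) * w (-(N : ℤ) - 2)) else 0)
      + (if s = -2 * (N : ℤ) - 4 then w (-(N : ℤ) - 2) * w (-(N : ℤ) - 2) else 0) := by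
  have hv : (-(N : ℤ) - 2) ∉ insert ((N : ℤ) + 1) (J N) := by
    simp only [Finset.mem_insert, mem_J]; push_neg
    constructor
    · omega
    · intro h; omega
  have hu : ((N : ℤ) + 1) ∉ J N := by rw [mem_J]; omega
  unfold g
  rw [J_succ, Finset.sum_insert hv, Finset.sum_insert hu]
  simp only [wI_succ]
  simp only [mul_add, Finset.sum_add_distrib]
  rw [sum_pick N s ((N : ℤ) + 1) (w ((N : ℤ) + 1)), sum_pick N s (-(N : ℤ) - 2) (w (-(N : ℤ) - 2))]
  -- now everything is explicit; handle the if-conditions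
  have e1 : (s - (-(N : ℤ) - 2) = (N : ℤ) + 1) ↔ (s = -1) := by omega
  have e2 : (s - (-(N : ℤ) - 2) = -(N : ℤ) - 2) ↔ (s = -2 * (N : ℤ) - 4) := by omega
  have e3 : (s - ((N : ℤ) + 1) = (N : ℤ) + 1) ↔ (s = 2 * (N : ℤ) + 2) := by omega
  have e4 : (s - ((N : ℤ) + 1) = -(N : ℤ) - 2) ↔ (s = -1) := by omega
  rw [if_congr e1 rfl rfl, if_congr e2 rfl rfl, if_congr e3 rfl rfl, if_congr e4 rfl rfl]
  by_cases c1 : s = -1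
  · rw [if_pos c1, if_pos c1, if_pos c1]
    rw [if_neg (by omega), if_neg (by omega), if_neg (by omega), if_neg (by omega)]
    ring
  · rw [if_neg c1, if_neg c1, if_neg c1]
    by_cases c2 : s = 2 * (N : ℤ) + 2
    · rw [if_pos c2, if_pos c2, if_neg (by omega), if_neg (by omega)]
      ring
    · rw [if_neg c2, if_neg c2]
      by_cases c3 : s = -2 * (N : ℤ) - 4
      · rw [if_pos c3, if_pos c3]
        ring
      · rw [if_neg c3, if_neg c3]
        ring

lemma w_v (N : ℕ) : w (-(N : ℤ) - 2) = - w ((N : ℤ) + 1) := by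
  rw [show (-(N : ℤ) - 2) = -1 - ((N : ℤ) + 1) by ring, w_reflect]

lemma wI_zero (N : ℕ) (m : ℤ) (h : ¬ (-(N : ℤ) - 1 ≤ m ∧ m ≤ N)) : wI N m = 0 := by
  unfold wI
  rw [if_neg (fun hc => h (mem_J.mp hc))]

lemma wI_mem (N : ℕ) (m : ℤ) (h : -(N : ℤ) - 1 ≤ m ∧ m ≤ N) : wI N m = w m := by
  unfold wI
  rw [if_pos (mem_J.mpr h)]

lemma phi_succ (n N : ℕ) (hn : n ≤ N) :
    phi n (N + 1) - phi n N
      = 3 * w ((N : ℤ) + 1) * (g N ((n : ℤ) - 2 - N) - g N ((n : ℤ) + 1 + N))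
        - 6 * (w ((N : ℤ) + 1) * w ((N : ℤ) + 1)) * w n := by
  have hv : (-(N : ℤ) - 2) ∉ insert ((N : ℤ) + 1) (J N) := by
    simp only [Finset.mem_insert, mem_J]; push_neg
    constructor
    · omega
    · intro h; omega
  have hu : ((N : ℤ) + 1) ∉ J N := by rw [mem_J]; omega
  rw [phi_eq n (N + 1), phi_eq n N, J_succ, Finset.sum_insert hv, Finset.sum_insert hu]
  -- normalize the inner sum
  have hnorm : ∀ a ∈ J N, w a * g (N + 1) ((n : ℤ) - 1 - a)
      = w a * g N ((n : ℤ) - 1 - a)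
        + w ((N : ℤ) + 1) * (2 * (w a * wI N (((n : ℤ) - 1 - ((N : ℤ) + 1)) - a)))
        + w (-(N : ℤ) - 2) * (2 * (w a * wI N (((n : ℤ) - 1 - (-(N : ℤ) - 2)) - a)))
        + w a * (if (n : ℤ) - 1 - a = 2 * (N : ℤ) + 2
            then w ((N : ℤ) + 1) * w ((N : ℤ) + 1) else 0)
        + w a * (if (n : ℤ) - 1 - a = -1
            then 2 * (w ((N : ℤ) + 1) * w (-(N : ℤ) - 2)) else 0)
        + w a * (if (n : ℤ) - 1 - a = -2 * (N : ℤ) - 4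
            then w (-(N : ℤ) - 2) * w (-(N : ℤ) - 2) else 0) := by
    intro a _
    rw [g_succ]
    rw [show (n : ℤ) - 1 - a - ((N : ℤ) + 1) = ((n : ℤ) - 1 - ((N : ℤ) + 1)) - a by ring,
        show (n : ℤ) - 1 - a - (-(N : ℤ) - 2) = ((n : ℤ) - 1 - (-(N : ℤ) - 2)) - a by ring]
    ring
  rw [Finset.sum_congr rfl hnorm]
  simp only [Finset.sum_add_distrib]
  rw [sum_pick N ((n : ℤ) - 1) (2 * (N : ℤ) + 2) (w ((N : ℤ) + 1) * w ((N : ℤ) + 1)),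
      sum_pick N ((n : ℤ) - 1) (-1) (2 * (w ((N : ℤ) + 1) * w (-(N : ℤ) - 2))),
      sum_pick N ((n : ℤ) - 1) (-2 * (N : ℤ) - 4) (w (-(N : ℤ) - 2) * w (-(N : ℤ) - 2))]
  have hg1 : ∑ a ∈ J N, w ((N : ℤ) + 1) * (2 * (w a * wI N (((n : ℤ) - 1 - ((N : ℤ) + 1)) - a)))
      = w ((N : ℤ) + 1) * (2 * g N ((n : ℤ) - 1 - ((N : ℤ) + 1))) := by
    unfold g
    simp only [Finset.mul_sum]
  have hg2 : ∑ a ∈ J N, w (-(N : ℤ) - 2) * (2 * (w a * wI N (((n : ℤ) - 1 - (-(N : ℤ) - 2)) - a)))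
      = w (-(N : ℤ) - 2) * (2 * g N ((n : ℤ) - 1 - (-(N : ℤ) - 2))) := by
    unfold g
    simp only [Finset.mul_sum]
  rw [hg1, hg2]
  -- expand the two boundary g's
  rw [g_succ N ((n : ℤ) - 1 - (-(N : ℤ) - 2)), g_succ N ((n : ℤ) - 1 - ((N : ℤ) + 1))]
  -- evaluate all indicators
  rw [wI_zero N ((n : ℤ) - 1 - (2 * (N : ℤ) + 2)) (by omega)]
  rw [wI_mem N ((n : ℤ) - 1 - (-1)) (by omega)]
  rw [wI_zero N ((n : ℤ) - 1 - (-2 * (N : ℤ) - 4)) (by omega)]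
  rw [wI_mem N ((n : ℤ) - 1 - (-(N : ℤ) - 2) - ((N : ℤ) + 1)) (by omega)]
  rw [wI_zero N ((n : ℤ) - 1 - (-(N : ℤ) - 2) - (-(N : ℤ) - 2)) (by omega)]
  rw [wI_zero N ((n : ℤ) - 1 - ((N : ℤ) + 1) - ((N : ℤ) + 1)) (by omega)]
  rw [wI_mem N ((n : ℤ) - 1 - ((N : ℤ) + 1) - (-(N : ℤ) - 2)) (by omega)]
  rw [if_neg (show ¬ ((n : ℤ) - 1 - (-(N : ℤ) - 2) = 2 * (N : ℤ) + 2) by omega)]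
  rw [if_neg (show ¬ ((n : ℤ) - 1 - (-(N : ℤ) - 2) = -1) by omega)]
  rw [if_neg (show ¬ ((n : ℤ) - 1 - (-(N : ℤ) - 2) = -2 * (N : ℤ) - 4) by omega)]
  rw [if_neg (show ¬ ((n : ℤ) - 1 - ((N : ℤ) + 1) = 2 * (N : ℤ) + 2) by omega)]
  rw [if_neg (show ¬ ((n : ℤ) - 1 - ((N : ℤ) + 1) = -1) by omega)]
  rw [if_neg (show ¬ ((n : ℤ) - 1 - ((N : ℤ) + 1) = -2 * (N : ℤ) - 4) by omega)]
  rw [show ((n : ℤ) - 1 - (-1)) = (n : ℤ) by ring]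
  rw [show ((n : ℤ) - 1 - (-(N : ℤ) - 2) - ((N : ℤ) + 1)) = (n : ℤ) by ring]
  rw [show ((n : ℤ) - 1 - ((N : ℤ) + 1) - (-(N : ℤ) - 2)) = (n : ℤ) by ring]
  rw [show ((n : ℤ) - 1 - ((N : ℤ) + 1)) = (n : ℤ) - 2 - N by ring]
  rw [show ((n : ℤ) - 1 - (-(N : ℤ) - 2)) = (n : ℤ) + 1 + N by ring]
  rw [w_v N]
  ring

end PhiAux

open PhiAux

theorem phi_increasing (N n : ℕ) (hN : 1 ≤ N) (hn : n ≤ N) :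
    phi n (N + 1) - phi n N =
      (3 / (2 * (N : ℚ) + 3)) * (1 / ((N : ℚ) + 1 - n) - 1 / ((n : ℚ) + N + 2)) *
        (∑ n₁ ∈ Finset.Icc ((n : ℤ) + 1) (N : ℤ), 1 / (2 * (n₁ : ℚ) + 1))
      + (3 / ((2 * (N : ℚ) + 3) * (2 * (n : ℚ) + 1))) *
        (1 / ((N : ℚ) + 1 - n) - 2 / (2 * (N : ℚ) + 3)) ∧
    0 < phi n (N + 1) - phi n N := by
  have hS : (∑ n₁ ∈ Finset.Icc ((n : ℤ) + 1) (N : ℤ), 1 / (2 * (n₁ : ℚ) + 1))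
      = ∑ b ∈ Finset.Icc ((n : ℤ) + 1) (N : ℤ), w b := rfl
  set S : ℚ := ∑ b ∈ Finset.Icc ((n : ℤ) + 1) (N : ℤ), w b with hSdef
  have hn0 : (0 : ℚ) ≤ (n : ℚ) := Nat.cast_nonneg n
  have hnN : (n : ℚ) ≤ (N : ℚ) := by exact_mod_cast hn
  have hN0 : (0 : ℚ) ≤ (N : ℚ) := Nat.cast_nonneg N
  have hA : (0 : ℚ) < (N : ℚ) + 1 - n := by linarith
  have hB : (0 : ℚ) < (n : ℚ) + N + 2 := by linarith
  have hC : (0 : ℚ) < 2 * (N : ℚ) + 3 := by linarith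
  have hD : (0 : ℚ) < 2 * (n : ℚ) + 1 := by linarith
  have hwu : w ((N : ℤ) + 1) = 1 / (2 * (N : ℚ) + 3) := by
    unfold w; push_cast; ring_nf
  have hwn : w (n : ℤ) = 1 / (2 * (n : ℚ) + 1) := by
    unfold w; push_cast; ring
  have hSnn : (0 : ℚ) ≤ S := by
    apply Finset.sum_nonneg
    intro b hb
    simp only [Finset.mem_Icc] at hb
    unfold w
    have hbp : (0 : ℚ) < 2 * (b : ℚ) + 1 := by
      have : (0 : ℤ) ≤ b := by omega
      have hb0 : (0 : ℚ) ≤ (b : ℚ) := by exact_mod_cast this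
      linarith
    positivity
  have heq : phi n (N + 1) - phi n N =
      (3 / (2 * (N : ℚ) + 3)) * (1 / ((N : ℚ) + 1 - n) - 1 / ((n : ℚ) + N + 2)) * S
      + (3 / ((2 * (N : ℚ) + 3) * (2 * (n : ℚ) + 1))) *
        (1 / ((N : ℚ) + 1 - n) - 2 / (2 * (N : ℚ) + 3)) := by
    rw [phi_succ n N hn, g_bot N n hn, g_top N n hn, hwu, hwn, ← hSdef]
    field_simp
    ring
  constructor
  · rw [hS]; exact heq
  · rw [heq]
    have h1 : (0 : ℚ) ≤ 1 / ((N : ℚ) + 1 - n) - 1 / ((n : ℚ) + N + 2) := by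
      rw [div_sub_div _ _ (ne_of_gt hA) (ne_of_gt hB)]
      apply div_nonneg
      · linarith
      · positivity
    have h2 : (0 : ℚ) < 1 / ((N : ℚ) + 1 - n) - 2 / (2 * (N : ℚ) + 3) := by
      rw [div_sub_div _ _ (ne_of_gt hA) (ne_of_gt hC)]
      apply div_pos
      · linarith
      · positivity
    have h3 : (0 : ℚ) ≤ (3 / (2 * (N : ℚ) + 3)) *
        (1 / ((N : ℚ) + 1 - n) - 1 / ((n : ℚ) + N + 2)) * S := by
      apply mul_nonneg (mul_nonneg (by positivity) h1) hSnn
    have h4 : (0 : ℚ) < (3 / ((2 * (N : ℚ) + 3) * (2 * (n : ℚ) + 1))) *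
        (1 / ((N : ℚ) + 1 - n) - 2 / (2 * (N : ℚ) + 3)) := by
      apply mul_pos (by positivity) h2
    linarith
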